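/- Let p be a probability vector of length 2n with p_i monotonically nonincreasing in i. Then gain(2n,p) − gain(n,p) = Σ_{i=1}^{n} D_i where D_i = p_{2i-1} log₂(2p_{2i-1}/(p_{2i-1}+p_{2i})) + p_{2i} log₂(2p_{2i}/(p_{2i-1}+p_{2i})), and this difference is bounded above by Σ_{i=1}^{n} (p_{2i-1} − p_{2i})²/((p_{2i-1}+p_{2i}) ln 2) ≤ (p₁ − p_{2n})/ln 2. -/

import Mathlib

open Finset Real

private lemma sum_pairs (f : ℕ → ℝ) (n : ℕ) :
    ∑ i ∈ Finset.range (2 * n), f i = ∑ i ∈ Finset.range n, (f (2 * i) + f (2 * i + 1)) := by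
  induction n with
  | zero => simp
  | succ n ih =>
    have h2 : 2 * (n + 1) = (2 * n + 1) + 1 := by ring
    rw [h2, Finset.sum_range_succ, Finset.sum_range_succ, Finset.sum_range_succ, ih]
    ring

private lemma logb_two_two : Real.logb 2 2 = 1 :=
  Real.logb_self_eq_one (by norm_num)

private lemma pair_eq (a b : ℝ) (ha : 0 ≤ a) (hb : 0 ≤ b) :
    a * Real.logb 2 (2 * a / (a + b)) + b * Real.logb 2 (2 * b / (a + b))
      = (a + b) + a * Real.logb 2 a + b * Real.logb 2 b
        - (a + b) * Real.logb 2 (a + b) := by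
  rcases eq_or_lt_of_le (add_nonneg ha hb) with hs | hs
  · have ha0 : a = 0 := by linarith
    have hb0 : b = 0 := by linarith
    simp [ha0, hb0]
  rcases eq_or_lt_of_le ha with ha0 | ha0
  · have hbpos : 0 < b := by linarith
    rw [← ha0]
    have h : 2 * b / (0 + b) = 2 := by rw [zero_add]; field_simp
    rw [h]
    simp only [zero_mul, zero_add, logb_two_two, mul_one]
    ring
  rcases eq_or_lt_of_le hb with hb0 | hb0
  · rw [← hb0]
    have h : 2 * a / (a + 0) = 2 := by rw [add_zero]; field_simp
    have h0 : Real.logb 2 (2 * 0 / (a + 0)) = 0 := by norm_num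
    rw [h, h0]
    simp only [zero_mul, add_zero, mul_zero, logb_two_two, mul_one]
    ring
  · have hsne : a + b ≠ 0 := ne_of_gt hs
    have h1 : Real.logb 2 (2 * a / (a + b)) = 1 + Real.logb 2 a - Real.logb 2 (a + b) := by
      rw [Real.logb_div (by positivity) hsne, Real.logb_mul two_ne_zero (ne_of_gt ha0),
        logb_two_two]
    have h2 : Real.logb 2 (2 * b / (a + b)) = 1 + Real.logb 2 b - Real.logb 2 (a + b) := by
      rw [Real.logb_div (by positivity) hsne, Real.logb_mul two_ne_zero (ne_of_gt hb0),
        logb_two_two]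
    rw [h1, h2]; ring

private lemma pair_le (a b : ℝ) (hb : 0 ≤ b) (hab : b ≤ a) :
    a * Real.logb 2 (2 * a / (a + b)) + b * Real.logb 2 (2 * b / (a + b))
      ≤ (a - b) ^ 2 / ((a + b) * Real.log 2) := by
  have ha : 0 ≤ a := le_trans hb hab
  rcases eq_or_lt_of_le (add_nonneg ha hb) with hs | hs
  · have ha0 : a = 0 := by linarith
    have hb0 : b = 0 := by linarith
    simp [ha0, hb0]
  · have ha0 : 0 < a := by nlinarith
    have hlog2 : 0 < Real.log 2 := Real.log_pos (by norm_num)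
    have key : a * Real.log (2 * a / (a + b)) + b * Real.log (2 * b / (a + b))
        ≤ (a - b) ^ 2 / (a + b) := by
      have hA : a * Real.log (2 * a / (a + b)) ≤ a * (2 * a / (a + b) - 1) :=
        mul_le_mul_of_nonneg_left
          (Real.log_le_sub_one_of_pos (by positivity)) ha
      have hB : b * Real.log (2 * b / (a + b)) ≤ b * (2 * b / (a + b) - 1) := by
        rcases eq_or_lt_of_le hb with hb0 | hb0
        · rw [← hb0]; simp
        · exact mul_le_mul_of_nonneg_left
            (Real.log_le_sub_one_of_pos (by positivity)) hb
      have heq : a * (2 * a / (a + b) - 1) + b * (2 * b / (a + b) - 1)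
          = (a - b) ^ 2 / (a + b) := by
        field_simp
        ring
      linarith
    have hLHS : a * Real.logb 2 (2 * a / (a + b)) + b * Real.logb 2 (2 * b / (a + b))
        = (a * Real.log (2 * a / (a + b)) + b * Real.log (2 * b / (a + b))) / Real.log 2 := by
      simp only [Real.logb]; ring
    rw [hLHS, div_le_div_iff₀ hlog2 (by positivity)]
    calc (a * Real.log (2 * a / (a + b)) + b * Real.log (2 * b / (a + b))) * ((a + b) * Real.log 2)
        ≤ ((a - b) ^ 2 / (a + b)) * ((a + b) * Real.log 2) := by
          apply mul_le_mul_of_nonneg_right key (by positivity)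
      _ = (a - b) ^ 2 * Real.log 2 := by field_simp

private lemma pair3 (a b : ℝ) (hb : 0 ≤ b) (hab : b ≤ a) :
    (a - b) ^ 2 / ((a + b) * Real.log 2) ≤ (a - b) / Real.log 2 := by
  have hlog2 : 0 < Real.log 2 := Real.log_pos (by norm_num)
  rcases eq_or_lt_of_le (add_nonneg (hb.trans hab) hb) with hs | hs
  · have ha0 : a = 0 := by linarith [hb.trans hab]
    have hb0 : b = 0 := by linarith
    simp [ha0, hb0]
  · rw [div_le_div_iff₀ (by positivity) hlog2]
    have h1 : (a - b) ^ 2 ≤ (a - b) * (a + b) := by nlinarith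
    nlinarith

/-- For a monotonically nonincreasing probability vector `p` of length `2n`,
`gain(2n,p) − gain(n,p) = Σ Dᵢ ≤ Σ (p₂ᵢ − p₂ᵢ₊₁)²/((p₂ᵢ + p₂ᵢ₊₁) ln 2) ≤ (p₀ − p_{2n−1})/ln 2`,
where `gain(m,p) = log₂ m − H(p)` and the coarsened vector merges adjacent pairs. -/
theorem stmt12 (n : ℕ) (hn : 0 < n) (p : ℕ → ℝ)
    (hp : ∀ i, i < 2 * n → 0 ≤ p i)
    (hsum : ∑ i ∈ Finset.range (2 * n), p i = 1)
    (hmono : ∀ i, i + 1 < 2 * n → p (i + 1) ≤ p i) :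
    ((Real.logb 2 (2 * n) - (- ∑ i ∈ Finset.range (2 * n), p i * Real.logb 2 (p i)))
        - (Real.logb 2 n - (- ∑ i ∈ Finset.range n,
            (p (2 * i) + p (2 * i + 1)) * Real.logb 2 (p (2 * i) + p (2 * i + 1))))
      = ∑ i ∈ Finset.range n,
          (p (2 * i) * Real.logb 2 (2 * p (2 * i) / (p (2 * i) + p (2 * i + 1)))
            + p (2 * i + 1) * Real.logb 2 (2 * p (2 * i + 1) / (p (2 * i) + p (2 * i + 1)))))
    ∧ (∑ i ∈ Finset.range n,
          (p (2 * i) * Real.logb 2 (2 * p (2 * i) / (p (2 * i) + p (2 * i + 1)))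
            + p (2 * i + 1) * Real.logb 2 (2 * p (2 * i + 1) / (p (2 * i) + p (2 * i + 1))))
        ≤ ∑ i ∈ Finset.range n,
            (p (2 * i) - p (2 * i + 1)) ^ 2 / ((p (2 * i) + p (2 * i + 1)) * Real.log 2))
    ∧ (∑ i ∈ Finset.range n,
          (p (2 * i) - p (2 * i + 1)) ^ 2 / ((p (2 * i) + p (2 * i + 1)) * Real.log 2)
        ≤ (p 0 - p (2 * n - 1)) / Real.log 2) := by
  have hpe : ∀ i ∈ Finset.range n, 0 ≤ p (2 * i) := fun i hi => by
    apply hp; have := Finset.mem_range.mp hi; omega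
  have hpo : ∀ i ∈ Finset.range n, 0 ≤ p (2 * i + 1) := fun i hi => by
    apply hp; have := Finset.mem_range.mp hi; omega
  have hmp : ∀ i ∈ Finset.range n, p (2 * i + 1) ≤ p (2 * i) := fun i hi => by
    apply hmono; have := Finset.mem_range.mp hi; omega
  refine ⟨?_, ?_, ?_⟩
  · -- equality
    have hcast : ((2 : ℝ) * (n : ℝ)) = ((2 * n : ℕ) : ℝ) := by push_cast; ring
    have hlog : Real.logb 2 ((2 * n : ℕ) : ℝ) = 1 + Real.logb 2 (n : ℝ) := by
      push_cast
      rw [Real.logb_mul two_ne_zero (by positivity), logb_two_two]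
    have h1 : ∑ i ∈ Finset.range n, (p (2 * i) + p (2 * i + 1)) = 1 := by
      rw [← sum_pairs p n]; exact hsum
    have h2 : ∑ i ∈ Finset.range (2 * n), p i * Real.logb 2 (p i)
        = ∑ i ∈ Finset.range n, (p (2 * i) * Real.logb 2 (p (2 * i))
            + p (2 * i + 1) * Real.logb 2 (p (2 * i + 1))) :=
      sum_pairs (fun i => p i * Real.logb 2 (p i)) n
    rw [Finset.sum_congr rfl (fun i hi => pair_eq _ _ (hpe i hi) (hpo i hi))]
    simp only [Finset.sum_sub_distrib, Finset.sum_add_distrib] at *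
    rw [hcast, hlog]
    linarith
  · exact Finset.sum_le_sum fun i hi => pair_le _ _ (hpo i hi) (hmp i hi)
  · have hlog2 : 0 < Real.log 2 := Real.log_pos (by norm_num)
    have htel : ∑ i ∈ Finset.range n, (p (2 * i) - p (2 * i + 1)) ≤ p 0 - p (2 * n - 1) := by
      have himg : ∑ i ∈ Finset.range n, (p (2 * i) - p (2 * i + 1))
          = ∑ j ∈ (Finset.range n).image (fun i => 2 * i), (p j - p (j + 1)) := by
        rw [Finset.sum_image]
        intro x _ y _ h
        simp only at h
        omega
      have hsub : (Finset.range n).image (fun i => 2 * i) ⊆ Finset.range (2 * n - 1) := by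
        intro j hj
        simp only [Finset.mem_image, Finset.mem_range] at hj ⊢
        obtain ⟨i, hi, rfl⟩ := hj
        omega
      have hle : ∑ j ∈ (Finset.range n).image (fun i => 2 * i), (p j - p (j + 1))
          ≤ ∑ j ∈ Finset.range (2 * n - 1), (p j - p (j + 1)) := by
        apply Finset.sum_le_sum_of_subset_of_nonneg hsub
        intro j hj _
        have hj' := Finset.mem_range.mp hj
        have := hmono j (by omega)
        linarith
      have hts : ∑ j ∈ Finset.range (2 * n - 1), (p j - p (j + 1))
          = p 0 - p (2 * n - 1) := by
        have := Finset.sum_range_sub' p (2 * n - 1)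
        simpa using this
      rw [himg]
      linarith
    calc ∑ i ∈ Finset.range n,
          (p (2 * i) - p (2 * i + 1)) ^ 2 / ((p (2 * i) + p (2 * i + 1)) * Real.log 2)
        ≤ ∑ i ∈ Finset.range n, (p (2 * i) - p (2 * i + 1)) / Real.log 2 :=
          Finset.sum_le_sum fun i hi => pair3 _ _ (hpo i hi) (hmp i hi)
      _ = (∑ i ∈ Finset.range n, (p (2 * i) - p (2 * i + 1))) / Real.log 2 := by
          rw [Finset.sum_div]
      _ ≤ (p 0 - p (2 * n - 1)) / Real.log 2 := by gcongr
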